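/- Let (ρ,σ) be density matrices on ℂ^n and (ρ′,σ′) be density matrices on ℂ^m. The following are equivalent: (i) for all α > 1, sup_α(ρ/σ) ≥ sup_α(ρ′/σ′) and inf_α(ρ/σ) ≤ inf_α(ρ′/σ′); (ii) ‖tσ − ρ‖₁ ≥ ‖tσ′ − ρ′‖₁ for all t ≥ 0. -/

import Mathlib

open scoped ComplexOrder

/-- The square root of a positive semidefinite matrix, as `Matrix.PosSemidef.sqrt` was defined
in the older Mathlib (since removed). -/
noncomputable def posSemidefSqrt {n : ℕ} {A : Matrix (Fin n) (Fin n) ℂ} (hA : A.PosSemidef) :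
    Matrix (Fin n) (Fin n) ℂ :=
  hA.1.eigenvectorUnitary.1 * Matrix.diagonal ((↑) ∘ (√·) ∘ hA.1.eigenvalues) *
  (star hA.1.eigenvectorUnitary : Matrix (Fin n) (Fin n) ℂ)

/-- The trace norm of a matrix, `‖A‖₁ = Tr[√(AᴴA)]`. -/
noncomputable def traceNorm {n : ℕ} (A : Matrix (Fin n) (Fin n) ℂ) : ℝ :=
  (posSemidefSqrt (Matrix.posSemidef_conjTranspose_mul_self A)).trace.re

/-- `sup_α(ρ/σ) = sup { Tr[Eρ]/Tr[Eσ] : α⁻¹·𝟙 ≤ E ≤ 𝟙 }`. -/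
noncomputable def supAlpha {n : ℕ} (α : ℝ) (ρ σ : Matrix (Fin n) (Fin n) ℂ) : ℝ :=
  sSup { x : ℝ | ∃ E : Matrix (Fin n) (Fin n) ℂ,
    (E - ((α⁻¹ : ℝ) : ℂ) • (1 : Matrix (Fin n) (Fin n) ℂ)).PosSemidef ∧
    ((1 : Matrix (Fin n) (Fin n) ℂ) - E).PosSemidef ∧
    x = ((E * ρ).trace.re) / ((E * σ).trace.re) }

/-- `inf_α(ρ/σ) = inf { Tr[Eρ]/Tr[Eσ] : α⁻¹·𝟙 ≤ E ≤ 𝟙 }`. -/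
noncomputable def infAlpha {n : ℕ} (α : ℝ) (ρ σ : Matrix (Fin n) (Fin n) ℂ) : ℝ :=
  sInf { x : ℝ | ∃ E : Matrix (Fin n) (Fin n) ℂ,
    (E - ((α⁻¹ : ℝ) : ℂ) • (1 : Matrix (Fin n) (Fin n) ℂ)).PosSemidef ∧
    ((1 : Matrix (Fin n) (Fin n) ℂ) - E).PosSemidef ∧
    x = ((E * ρ).trace.re) / ((E * σ).trace.re) }

open Matrix

variable {n : ℕ}

lemma posSemidefSqrt_congr {A B : Matrix (Fin n) (Fin n) ℂ} (h : A = B) (hA : A.PosSemidef)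
    (hB : B.PosSemidef) : posSemidefSqrt hA = posSemidefSqrt hB := by
  subst h; rfl

lemma posSemidefSqrt_unique {S M : Matrix (Fin n) (Fin n) ℂ} (hS : S.PosSemidef)
    (hM : M.PosSemidef) (h : S ^ 2 = M) : S = posSemidefSqrt hM := by
  have e1 : posSemidefSqrt hM = cfc Real.sqrt M := by
    rw [hM.1.cfc_eq, Matrix.IsHermitian.cfc, Unitary.conjStarAlgAut_apply]; rfl
  have hSa : IsSelfAdjoint S := hS.1
  have hspec : ∀ x ∈ spectrum ℝ S, 0 ≤ x := by
    open scoped MatrixOrder in exact fun x hx => spectrum_nonneg_of_nonneg hS.nonneg hx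
  rw [e1, ← h, ← cfc_pow_id (R := ℝ) S 2, ← cfc_comp Real.sqrt (· ^ 2) S]
  conv_lhs => rw [← cfc_id' ℝ S]
  exact cfc_congr fun x hx => by
    show x = Real.sqrt (x ^ 2)
    rw [Real.sqrt_sq (hspec x hx)]

lemma psd_exists_eq_conjTranspose_mul_self {N : Matrix (Fin n) (Fin n) ℂ} (hN : N.PosSemidef) :
    ∃ B : Matrix (Fin n) (Fin n) ℂ, N = Bᴴ * B := by
  have hNa : IsSelfAdjoint N := hN.1
  have hspec : ∀ x ∈ spectrum ℝ N, 0 ≤ x := by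
    open scoped MatrixOrder in exact fun x hx => spectrum_nonneg_of_nonneg hN.nonneg hx
  refine ⟨cfc Real.sqrt N, ?_⟩
  have hsa : IsSelfAdjoint (cfc Real.sqrt N) := cfc_predicate Real.sqrt N
  rw [← Matrix.star_eq_conjTranspose, hsa.star_eq, ← cfc_mul Real.sqrt Real.sqrt N]
  conv_lhs => rw [← cfc_id' ℝ N]
  exact cfc_congr fun x hx => (Real.mul_self_sqrt (hspec x hx)).symm

lemma conj_mul_conj {U M N : Matrix (Fin n) (Fin n) ℂ} (hUU : star U * U = 1) :
    (U * M * star U) * (U * N * star U) = U * (M * N) * star U := by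
  simp only [Matrix.mul_assoc]
  rw [← Matrix.mul_assoc (star U) U, hUU, Matrix.one_mul]

lemma trace_conj {U M : Matrix (Fin n) (Fin n) ℂ} (hUU : star U * U = 1) :
    (U * M * star U).trace = M.trace := by
  rw [Matrix.trace_mul_cycle, hUU, Matrix.one_mul]

lemma conj_sub_smul {U M : Matrix (Fin n) (Fin n) ℂ} (hUU' : U * star U = 1) (c : ℂ) :
    U * (M - c • 1) * star U = U * M * star U - c • 1 := by
  rw [Matrix.mul_sub, Matrix.sub_mul, mul_smul_comm, Matrix.mul_one, smul_mul_assoc, hUU']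

lemma one_sub_conj {U M : Matrix (Fin n) (Fin n) ℂ} (hUU' : U * star U = 1) :
    U * (1 - M) * star U = 1 - U * M * star U := by
  rw [Matrix.mul_sub, Matrix.sub_mul, Matrix.mul_one, hUU']

lemma trace_re_eq_sum {A : Matrix (Fin n) (Fin n) ℂ} (hA : A.IsHermitian) :
    A.trace.re = ∑ i, hA.eigenvalues i := by
  have hUU : (star (hA.eigenvectorUnitary : Matrix (Fin n) (Fin n) ℂ)) * hA.eigenvectorUnitary = 1 :=
    Unitary.coe_star_mul_self _
  conv_lhs => rw [hA.spectral_theorem, Unitary.conjStarAlgAut_apply]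
  rw [trace_conj hUU, Matrix.trace_diagonal]
  simp [Complex.re_sum]

lemma traceNorm_eq_sum_abs {A : Matrix (Fin n) (Fin n) ℂ} (hA : A.IsHermitian) :
    traceNorm A = ∑ i, |hA.eigenvalues i| := by
  classical
  set U : Matrix (Fin n) (Fin n) ℂ := (hA.eigenvectorUnitary : Matrix (Fin n) (Fin n) ℂ) with hU
  have hUU : star U * U = 1 := Unitary.coe_star_mul_self _
  set S : Matrix (Fin n) (Fin n) ℂ :=
    U * diagonal (fun i => ((|hA.eigenvalues i| : ℝ) : ℂ)) * star U with hS
  have hSpsd : S.PosSemidef := by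
    refine (Matrix.PosSemidef.diagonal fun i => ?_).mul_mul_conjTranspose_same U
    simpa using Complex.zero_le_real.mpr (abs_nonneg (hA.eigenvalues i))
  have habs : (fun i => ((|hA.eigenvalues i| : ℝ) : ℂ) * ((|hA.eigenvalues i| : ℝ) : ℂ))
      = (fun i => (RCLike.ofReal ∘ hA.eigenvalues) i * (RCLike.ofReal ∘ hA.eigenvalues) i) := by
    funext i
    simp only [Function.comp_apply]
    norm_cast
    rw [abs_mul_abs_self]
    rfl
  have hsq : S ^ 2 = Aᴴ * A := by
    rw [pow_two, hS, conj_mul_conj hUU, diagonal_mul_diagonal, habs]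
    conv_rhs => rw [hA.eq, hA.spectral_theorem, Unitary.conjStarAlgAut_apply]
    rw [conj_mul_conj hUU, diagonal_mul_diagonal]
  have hSsqrt : S = posSemidefSqrt (Matrix.posSemidef_conjTranspose_mul_self A) :=
    posSemidefSqrt_unique hSpsd _ hsq
  rw [traceNorm, ← hSsqrt, hS, trace_conj hUU, Matrix.trace_diagonal]
  simp [Complex.re_sum]
variable {n : ℕ}

lemma psd_diag_re {M : Matrix (Fin n) (Fin n) ℂ} (hM : M.PosSemidef) (i : Fin n) :
    0 ≤ (M i i).re := by
  have := hM.re_dotProduct_nonneg (Pi.single i 1)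
  simpa [dotProduct, mulVec, Pi.single_apply] using this

lemma sum_if_split (c : ℝ) (f : Fin n → ℝ) :
    ∑ i, (if 0 ≤ f i then f i else c * f i)
      = ((1 + c) * ∑ i, f i + (1 - c) * ∑ i, |f i|) / 2 := by
  rw [Finset.mul_sum, Finset.mul_sum, ← Finset.sum_add_distrib, Finset.sum_div]
  refine Finset.sum_congr rfl fun i _ => ?_
  by_cases h : 0 ≤ f i
  · rw [if_pos h, abs_of_nonneg h]; ring
  · rw [if_neg h, abs_of_neg (lt_of_not_ge h)]; ring

/-- Key upper bound: for `c•1 ≤ E ≤ 1` and Hermitian `A`,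
`Re Tr[E A] ≤ ((1+c) Tr A + (1-c) ‖A‖₁)/2`. -/
lemma main_ub {A E : Matrix (Fin n) (Fin n) ℂ} (hA : A.IsHermitian) {c : ℝ}
    (h1 : (E - (c : ℂ) • 1).PosSemidef) (h2 : ((1 : Matrix (Fin n) (Fin n) ℂ) - E).PosSemidef) :
    (E * A).trace.re ≤ ((1 + c) * A.trace.re + (1 - c) * traceNorm A) / 2 := by
  classical
  set U : Matrix (Fin n) (Fin n) ℂ := (hA.eigenvectorUnitary : Matrix (Fin n) (Fin n) ℂ) with hU
  have hUU : star U * U = 1 := Unitary.coe_star_mul_self _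
  have hUU' : U * star U = 1 := (Matrix.mem_unitaryGroup_iff).mp hA.eigenvectorUnitary.2
  set F : Matrix (Fin n) (Fin n) ℂ := star U * E * U with hF
  set l : Fin n → ℝ := hA.eigenvalues with hl
  -- trace identity
  have key : (E * A).trace = ∑ i, F i i * ((l i : ℝ) : ℂ) := by
    conv_lhs => rw [hA.spectral_theorem, Unitary.conjStarAlgAut_apply]
    rw [show E * (U * diagonal (RCLike.ofReal ∘ l) * star U)
        = U * ((star U * E * U) * diagonal (RCLike.ofReal ∘ l)) * star U by
      simp only [Matrix.mul_assoc]
      rw [← Matrix.mul_assoc U (star U), hUU', Matrix.one_mul]]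
    rw [trace_conj hUU, Matrix.trace]
    refine Finset.sum_congr rfl fun i _ => ?_
    simp [Matrix.diag, Matrix.mul_diagonal, Function.comp, hF]
  -- diagonal bounds
  have hFlow : ∀ i, c ≤ (F i i).re := by
    intro i
    have hpsd : (F - (c : ℂ) • 1).PosSemidef := by
      have h := h1.conjTranspose_mul_mul_same U
      rw [← Matrix.star_eq_conjTranspose] at h
      have : star U * (E - (c : ℂ) • 1) * U = F - (c : ℂ) • 1 := by
        rw [Matrix.mul_sub, Matrix.sub_mul, mul_smul_comm, smul_mul_assoc, Matrix.mul_one, hUU]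
      rwa [this] at h
    have := psd_diag_re hpsd i
    have hent : ((F - (c : ℂ) • 1) i i).re = (F i i).re - c := by
      simp [Matrix.sub_apply, Matrix.smul_apply, Matrix.one_apply_eq]
    linarith [hent ▸ this]
  have hFhigh : ∀ i, (F i i).re ≤ 1 := by
    intro i
    have hpsd : ((1 : Matrix (Fin n) (Fin n) ℂ) - F).PosSemidef := by
      have h := h2.conjTranspose_mul_mul_same U
      rw [← Matrix.star_eq_conjTranspose] at h
      have : star U * ((1 : Matrix (Fin n) (Fin n) ℂ) - E) * U = 1 - F := by
        rw [Matrix.mul_sub, Matrix.sub_mul, Matrix.mul_one, hUU]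
      rwa [this] at h
    have := psd_diag_re hpsd i
    have hent : (((1 : Matrix (Fin n) (Fin n) ℂ) - F) i i).re = 1 - (F i i).re := by
      simp [Matrix.sub_apply, Matrix.one_apply_eq]
    linarith [hent ▸ this]
  have hre : (E * A).trace.re = ∑ i, l i * (F i i).re := by
    rw [key, Complex.re_sum]
    refine Finset.sum_congr rfl fun i _ => ?_
    rw [Complex.mul_re]
    simp [mul_comm]
  rw [hre, trace_re_eq_sum hA, traceNorm_eq_sum_abs hA, ← sum_if_split c l]
  refine Finset.sum_le_sum fun i _ => ?_
  by_cases h : 0 ≤ l i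
  · rw [if_pos h]
    nlinarith [hFhigh i, hFlow i]
  · rw [if_neg h]
    nlinarith [hFlow i, lt_of_not_ge h]

/-- Attainment: there is `E` in the window achieving the bound. -/
lemma main_attain {A : Matrix (Fin n) (Fin n) ℂ} (hA : A.IsHermitian) {c : ℝ} (hc : c ≤ 1) :
    ∃ E : Matrix (Fin n) (Fin n) ℂ, (E - (c : ℂ) • 1).PosSemidef ∧
      ((1 : Matrix (Fin n) (Fin n) ℂ) - E).PosSemidef ∧
      (E * A).trace.re = ((1 + c) * A.trace.re + (1 - c) * traceNorm A) / 2 := by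
  classical
  set U : Matrix (Fin n) (Fin n) ℂ := (hA.eigenvectorUnitary : Matrix (Fin n) (Fin n) ℂ) with hU
  have hUU : star U * U = 1 := Unitary.coe_star_mul_self _
  have hUU' : U * star U = 1 := (Matrix.mem_unitaryGroup_iff).mp hA.eigenvectorUnitary.2
  set l : Fin n → ℝ := hA.eigenvalues with hl
  set w : Fin n → ℂ := fun i => if 0 ≤ l i then 1 else (c : ℂ) with hw
  have hsmul : ((c : ℂ)) • (1 : Matrix (Fin n) (Fin n) ℂ) = diagonal (fun _ => (c : ℂ)) := by
    funext i j
    by_cases h : i = j <;> simp [Matrix.diagonal_apply, Matrix.one_apply, h]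
  refine ⟨U * diagonal w * star U, ?_, ?_, ?_⟩
  · rw [show U * diagonal w * star U - (c : ℂ) • 1 = U * (diagonal w - (c : ℂ) • 1) * star U from
      (conj_sub_smul hUU' c).symm, hsmul, Matrix.diagonal_sub, Matrix.star_eq_conjTranspose U]
    refine (Matrix.PosSemidef.diagonal fun i => ?_).mul_mul_conjTranspose_same U
    by_cases h : 0 ≤ l i
    · have : w i - (c : ℂ) = (((1 - c : ℝ)) : ℂ) := by
        simp only [hw, if_pos h]
        push_cast
        ring
      simpa [this] using Complex.zero_le_real.mpr (by linarith : (0:ℝ) ≤ 1 - c)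
    · have : w i - (c : ℂ) = 0 := by simp [hw, if_neg h]
      simp [this]
  · rw [show (1 : Matrix (Fin n) (Fin n) ℂ) - U * diagonal w * star U
        = U * (1 - diagonal w) * star U from (one_sub_conj hUU').symm,
      ← Matrix.diagonal_one, Matrix.diagonal_sub, Matrix.star_eq_conjTranspose U]
    refine (Matrix.PosSemidef.diagonal fun i => ?_).mul_mul_conjTranspose_same U
    by_cases h : 0 ≤ l i
    · have : (1 : ℂ) - w i = 0 := by simp [hw, if_pos h]
      simp [this]
    · have : (1 : ℂ) - w i = (((1 - c : ℝ)) : ℂ) := by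
        simp [hw, if_neg h]
      simpa [this] using Complex.zero_le_real.mpr (by linarith : (0:ℝ) ≤ 1 - c)
  · have hmul : U * diagonal w * star U * A
        = U * (diagonal w * diagonal (RCLike.ofReal ∘ l)) * star U := by
      conv_lhs => rw [hA.spectral_theorem, Unitary.conjStarAlgAut_apply]
      rw [conj_mul_conj hUU]
    rw [hmul, trace_conj hUU, Matrix.diagonal_mul_diagonal, Matrix.trace_diagonal,
      trace_re_eq_sum hA, traceNorm_eq_sum_abs hA, ← sum_if_split c l, Complex.re_sum]
    refine Finset.sum_congr rfl fun i _ => ?_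
    by_cases h : 0 ≤ l i
    · simp [hw, if_pos h, Function.comp]
    · rw [if_neg h]
      simp only [hw, if_neg h, Function.comp_apply]
      have hre : (RCLike.ofReal (l i) : ℂ) = ((l i : ℝ) : ℂ) := rfl
      rw [hre, ← Complex.ofReal_mul]
      simp

lemma traceNorm_neg (A : Matrix (Fin n) (Fin n) ℂ) : traceNorm (-A) = traceNorm A := by
  have e : posSemidefSqrt (Matrix.posSemidef_conjTranspose_mul_self (-A))
      = posSemidefSqrt (Matrix.posSemidef_conjTranspose_mul_self A) := by
    exact posSemidefSqrt_congr (by simp) _ _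
  rw [traceNorm, traceNorm, e]

lemma psd_smul_real {B : Matrix (Fin n) (Fin n) ℂ} (hB : B.PosSemidef) {r : ℝ} (hr : 0 ≤ r) :
    (((r : ℝ) : ℂ) • B).PosSemidef := by
  constructor
  · unfold Matrix.IsHermitian
    rw [Matrix.conjTranspose_smul, RCLike.star_def, Complex.conj_ofReal, hB.1.eq]
  · exact (hB.smul (Complex.zero_le_real.mpr hr)).2

lemma traceNorm_real_smul {B : Matrix (Fin n) (Fin n) ℂ} (hB : B.PosSemidef) (r : ℝ) :
    traceNorm (((r : ℝ) : ℂ) • B) = |r| * B.trace.re := by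
  have e : (((|r| : ℝ) : ℂ) • B) = posSemidefSqrt (Matrix.posSemidef_conjTranspose_mul_self
      (((r : ℝ) : ℂ) • B)) := by
    refine posSemidefSqrt_unique (psd_smul_real hB (abs_nonneg r)) _ ?_
    rw [Matrix.conjTranspose_smul, RCLike.star_def, Complex.conj_ofReal, pow_two,
      smul_mul_smul_comm, hB.1.eq, ← Complex.ofReal_mul, abs_mul_abs_self, Complex.ofReal_mul,
      smul_mul_smul_comm]
  rw [traceNorm, ← e, Matrix.trace_smul, smul_eq_mul]
  simp [Complex.mul_re]

lemma trace_mul_psd_re_nonneg {M N : Matrix (Fin n) (Fin n) ℂ}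
    (hM : M.PosSemidef) (hN : N.PosSemidef) : 0 ≤ (M * N).trace.re := by
  obtain ⟨B, rfl⟩ := psd_exists_eq_conjTranspose_mul_self hN
  rw [← Matrix.mul_assoc, Matrix.trace_mul_cycle]
  have hpsd : (B * M * Bᴴ).PosSemidef := hM.mul_mul_conjTranspose_same B
  rw [Matrix.trace, Complex.re_sum]
  exact Finset.sum_nonneg fun i _ => psd_diag_re hpsd i

lemma herm_smul_sub {ρ σ : Matrix (Fin n) (Fin n) ℂ} (hρ : ρ.IsHermitian) (hσ : σ.IsHermitian)
    (t : ℝ) : ((t : ℂ) • σ - ρ).IsHermitian := by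
  unfold Matrix.IsHermitian
  rw [Matrix.conjTranspose_sub, Matrix.conjTranspose_smul, RCLike.star_def, Complex.conj_ofReal,
    hσ.eq, hρ.eq]

lemma herm_sub_smul {ρ σ : Matrix (Fin n) (Fin n) ℂ} (hρ : ρ.IsHermitian) (hσ : σ.IsHermitian)
    (t : ℝ) : (ρ - (t : ℂ) • σ).IsHermitian := by
  unfold Matrix.IsHermitian
  rw [Matrix.conjTranspose_sub, Matrix.conjTranspose_smul, RCLike.star_def, Complex.conj_ofReal,
    hσ.eq, hρ.eq]

lemma trace_mul_sub_smul (E ρ σ : Matrix (Fin n) (Fin n) ℂ) (t : ℝ) :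
    (E * (ρ - (t : ℂ) • σ)).trace.re = (E * ρ).trace.re - t * (E * σ).trace.re := by
  rw [Matrix.mul_sub, Matrix.trace_sub, mul_smul_comm, Matrix.trace_smul, smul_eq_mul]
  simp [Complex.sub_re, Complex.mul_re]

lemma trace_mul_smul_sub (E ρ σ : Matrix (Fin n) (Fin n) ℂ) (t : ℝ) :
    (E * ((t : ℂ) • σ - ρ)).trace.re = t * (E * σ).trace.re - (E * ρ).trace.re := by
  have : (t : ℂ) • σ - ρ = -(ρ - (t : ℂ) • σ) := by rw [neg_sub]
  rw [this, Matrix.mul_neg, Matrix.trace_neg, Complex.neg_re, trace_mul_sub_smul]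
  ring

lemma trace_re_sub_smul {ρ σ : Matrix (Fin n) (Fin n) ℂ} (hρtr : ρ.trace = 1)
    (hσtr : σ.trace = 1) (t : ℝ) : ((t : ℂ) • σ - ρ).trace.re = t - 1 := by
  rw [Matrix.trace_sub, Matrix.trace_smul, hρtr, hσtr, smul_eq_mul, mul_one]
  simp

lemma trace_window_lower {E B : Matrix (Fin n) (Fin n) ℂ} {c : ℝ}
    (h1 : (E - (c : ℂ) • 1).PosSemidef) (hB : B.PosSemidef) (hBtr : B.trace = 1) :
    c ≤ (E * B).trace.re := by
  have h := trace_mul_psd_re_nonneg h1 hB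
  rw [Matrix.sub_mul, Matrix.trace_sub, smul_mul_assoc, Matrix.trace_smul, Matrix.one_mul,
    hBtr, smul_eq_mul, mul_one, Complex.sub_re, Complex.ofReal_re] at h
  linarith

lemma trace_window_upper {E B : Matrix (Fin n) (Fin n) ℂ}
    (h2 : ((1 : Matrix (Fin n) (Fin n) ℂ) - E).PosSemidef) (hB : B.PosSemidef)
    (hBtr : B.trace = 1) : (E * B).trace.re ≤ 1 := by
  have h := trace_mul_psd_re_nonneg h2 hB
  rw [Matrix.sub_mul, Matrix.trace_sub, Matrix.one_mul, hBtr, Complex.sub_re] at h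
  simp at h
  linarith

lemma window_num_nonneg {E B : Matrix (Fin n) (Fin n) ℂ} {c : ℝ} (hc : 0 ≤ c)
    (h1 : (E - (c : ℂ) • 1).PosSemidef) (hB : B.PosSemidef) : 0 ≤ (E * B).trace.re := by
  have hE : E.PosSemidef := by
    have := h1.add (psd_smul_real Matrix.PosSemidef.one hc)
    rwa [sub_add_cancel] at this
  exact trace_mul_psd_re_nonneg hE hB

lemma abs_trace_le_traceNorm {A : Matrix (Fin n) (Fin n) ℂ} (hA : A.IsHermitian) :
    |A.trace.re| ≤ traceNorm A := by
  have hpsd2 : ((1 : Matrix (Fin n) (Fin n) ℂ) - ((-1 : ℝ) : ℂ) • 1).PosSemidef := by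
    rw [show ((-1 : ℝ) : ℂ) = -1 by norm_num, neg_smul, one_smul, sub_neg_eq_add]
    exact Matrix.PosSemidef.one.add Matrix.PosSemidef.one
  rw [abs_le]
  constructor
  · have h := main_ub hA (c := -1) (E := -1)
      (by rw [show ((-1 : ℝ) : ℂ) = -1 by norm_num, neg_smul, one_smul, sub_neg_eq_add,
        neg_add_cancel]; exact Matrix.PosSemidef.zero)
      (by rw [sub_neg_eq_add]; exact Matrix.PosSemidef.one.add Matrix.PosSemidef.one)
    rw [neg_one_mul, Matrix.trace_neg, Complex.neg_re] at h
    linarith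
  · have h := main_ub hA (c := -1) (E := 1) hpsd2 (by rw [sub_self]; exact Matrix.PosSemidef.zero)
    rw [Matrix.one_mul] at h
    linarith

lemma traceNorm_lipschitz {ρ σ : Matrix (Fin n) (Fin n) ℂ} (hρ : ρ.IsHermitian)
    (hσ : σ.PosSemidef) (hσtr : σ.trace = 1) (t s : ℝ) :
    traceNorm ((t : ℂ) • σ - ρ) ≤ traceNorm ((s : ℂ) • σ - ρ) + |t - s| := by
  obtain ⟨S, hS1, hS2, hSval⟩ := main_attain (herm_smul_sub hρ hσ.1 t) (c := -1) (by norm_num)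
  have hb1 := main_ub (herm_smul_sub hρ hσ.1 s) (c := -1) hS1 hS2
  have hsm : (((t - s : ℝ)) : ℂ) • σ = ((t : ℂ) • σ - ρ) - ((s : ℂ) • σ - ρ) := by
    push_cast
    rw [sub_smul]
    abel
  have hherm : ((((t - s : ℝ)) : ℂ) • σ).IsHermitian := by
    have := herm_smul_sub (Matrix.isHermitian_zero (α := ℂ) (n := Fin n)) hσ.1 (t - s)
    simpa using this
  have hb2 := main_ub hherm (c := -1) hS1 hS2
  rw [traceNorm_real_smul hσ (t - s), hσtr] at hb2
  have hlin : (S * ((t : ℂ) • σ - ρ)).trace.re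
      = (S * ((s : ℂ) • σ - ρ)).trace.re + (S * ((((t - s : ℝ)) : ℂ) • σ)).trace.re := by
    rw [hsm, Matrix.mul_sub S ((t : ℂ) • σ - ρ) ((s : ℂ) • σ - ρ), Matrix.trace_sub,
      Complex.sub_re]
    ring
  rw [hSval] at hlin
  rw [Complex.one_re] at hb2
  nlinarith [hb1, hb2, hlin]

section SetLemmas

variable {ρ σ : Matrix (Fin n) (Fin n) ℂ} {α : ℝ}

/-- The test set appearing in `supAlpha`/`infAlpha`. -/
def tSet (α : ℝ) (ρ σ : Matrix (Fin n) (Fin n) ℂ) : Set ℝ :=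
  { x : ℝ | ∃ E : Matrix (Fin n) (Fin n) ℂ,
    (E - ((α⁻¹ : ℝ) : ℂ) • (1 : Matrix (Fin n) (Fin n) ℂ)).PosSemidef ∧
    ((1 : Matrix (Fin n) (Fin n) ℂ) - E).PosSemidef ∧
    x = ((E * ρ).trace.re) / ((E * σ).trace.re) }

lemma supAlpha_eq : supAlpha α ρ σ = sSup (tSet α ρ σ) := rfl
lemma infAlpha_eq : infAlpha α ρ σ = sInf (tSet α ρ σ) := rfl

lemma one_mem_tSet (hα : 1 < α) (hρtr : ρ.trace = 1) (hσtr : σ.trace = 1) :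
    (1 : ℝ) ∈ tSet α ρ σ := by
  have hc1 : α⁻¹ ≤ 1 := by
    rw [inv_le_one_iff₀]
    right; linarith
  refine ⟨1, ?_, ?_, ?_⟩
  · have : (1 : Matrix (Fin n) (Fin n) ℂ) - ((α⁻¹ : ℝ) : ℂ) • 1
        = diagonal (fun _ => (((1 - α⁻¹ : ℝ)) : ℂ)) := by
      funext i j
      by_cases h : i = j <;>
        simp [Matrix.diagonal_apply, Matrix.one_apply, Matrix.sub_apply, h]
    rw [this]
    exact Matrix.PosSemidef.diagonal fun i => Complex.zero_le_real.mpr (by linarith)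
  · rw [sub_self]; exact Matrix.PosSemidef.zero
  · rw [Matrix.one_mul, Matrix.one_mul, hρtr, hσtr]
    norm_num

lemma tSet_nonneg (hα : 1 < α) (hρ : ρ.PosSemidef) (hσ : σ.PosSemidef) :
    ∀ x ∈ tSet α ρ σ, (0 : ℝ) ≤ x := by
  rintro x ⟨E, h1, h2, rfl⟩
  have hc : (0 : ℝ) ≤ α⁻¹ := inv_nonneg.mpr (by linarith)
  exact div_nonneg (window_num_nonneg hc h1 hρ) (window_num_nonneg hc h1 hσ)

lemma tSet_le_alpha (hα : 1 < α) (hρ : ρ.PosSemidef) (hρtr : ρ.trace = 1)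
    (hσ : σ.PosSemidef) (hσtr : σ.trace = 1) :
    ∀ x ∈ tSet α ρ σ, x ≤ α := by
  rintro x ⟨E, h1, h2, rfl⟩
  have hc : (0 : ℝ) < α⁻¹ := inv_pos.mpr (by linarith)
  have hden : α⁻¹ ≤ (E * σ).trace.re := trace_window_lower h1 hσ hσtr
  have hnum : (E * ρ).trace.re ≤ 1 := trace_window_upper h2 hρ hρtr
  have hden0 : (0 : ℝ) < (E * σ).trace.re := lt_of_lt_of_le hc hden
  rw [div_le_iff₀ hden0]
  have : α⁻¹ * α = 1 := inv_mul_cancel₀ (by positivity)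
  nlinarith

lemma bddAbove_tSet (hα : 1 < α) (hρ : ρ.PosSemidef) (hρtr : ρ.trace = 1)
    (hσ : σ.PosSemidef) (hσtr : σ.trace = 1) : BddAbove (tSet α ρ σ) :=
  ⟨α, fun x hx => tSet_le_alpha hα hρ hρtr hσ hσtr x hx⟩

lemma bddBelow_tSet (hα : 1 < α) (hρ : ρ.PosSemidef) (hσ : σ.PosSemidef) :
    BddBelow (tSet α ρ σ) :=
  ⟨0, fun x hx => tSet_nonneg hα hρ hσ x hx⟩

end SetLemmas

section Criteria

variable {ρ σ : Matrix (Fin n) (Fin n) ℂ} {α t : ℝ}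

lemma le_supAlpha_of (hα : 1 < α) (hρ : ρ.PosSemidef) (hρtr : ρ.trace = 1)
    (hσ : σ.PosSemidef) (hσtr : σ.trace = 1)
    (h : 0 ≤ ((1 + α⁻¹) * (1 - t) + (1 - α⁻¹) * traceNorm ((t : ℂ) • σ - ρ)) / 2) :
    t ≤ supAlpha α ρ σ := by
  have hc0 : (0 : ℝ) < α⁻¹ := inv_pos.mpr (by linarith)
  have hc1 : α⁻¹ ≤ 1 := by rw [inv_le_one_iff₀]; right; linarith
  obtain ⟨E, h1, h2, hval⟩ := main_attain (herm_sub_smul hρ.1 hσ.1 t) (c := α⁻¹) hc1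
  have htr : (ρ - (t : ℂ) • σ).trace.re = 1 - t := by
    have := trace_re_sub_smul hρtr hσtr t
    have hneg : (ρ - (t : ℂ) • σ) = -((t : ℂ) • σ - ρ) := by rw [neg_sub]
    rw [hneg, Matrix.trace_neg, Complex.neg_re, this]
    ring
  have htn : traceNorm (ρ - (t : ℂ) • σ) = traceNorm ((t : ℂ) • σ - ρ) := by
    rw [show ρ - (t : ℂ) • σ = -((t : ℂ) • σ - ρ) from (neg_sub _ _).symm, traceNorm_neg]
  rw [htr, htn] at hval
  have hEA : 0 ≤ (E * (ρ - (t : ℂ) • σ)).trace.re := le_of_le_of_eq h hval.symm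
  rw [trace_mul_sub_smul] at hEA
  have hden : α⁻¹ ≤ (E * σ).trace.re := trace_window_lower h1 hσ hσtr
  have hden0 : (0 : ℝ) < (E * σ).trace.re := lt_of_lt_of_le hc0 hden
  have hx : t ≤ (E * ρ).trace.re / (E * σ).trace.re := by
    rw [le_div_iff₀ hden0]
    linarith
  exact hx.trans (le_csSup (bddAbove_tSet hα hρ hρtr hσ hσtr) ⟨E, h1, h2, rfl⟩)

lemma of_le_supAlpha (hα : 1 < α) (hρ : ρ.PosSemidef) (hρtr : ρ.trace = 1)
    (hσ : σ.PosSemidef) (hσtr : σ.trace = 1) (h : t ≤ supAlpha α ρ σ) :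
    0 ≤ ((1 + α⁻¹) * (1 - t) + (1 - α⁻¹) * traceNorm ((t : ℂ) • σ - ρ)) / 2 := by
  have hc0 : (0 : ℝ) < α⁻¹ := inv_pos.mpr (by linarith)
  have hc1 : α⁻¹ ≤ 1 := by rw [inv_le_one_iff₀]; right; linarith
  refine le_of_forall_pos_le_add fun ε hε => ?_
  have hlt : t - ε < sSup (tSet α ρ σ) := lt_of_lt_of_le (by linarith) h
  obtain ⟨x, hxmem, hxgt⟩ := exists_lt_of_lt_csSup ⟨1, one_mem_tSet hα hρtr hσtr⟩ hlt
  obtain ⟨E, h1, h2, rfl⟩ := hxmem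
  have hden : α⁻¹ ≤ (E * σ).trace.re := trace_window_lower h1 hσ hσtr
  have hden0 : (0 : ℝ) < (E * σ).trace.re := lt_of_lt_of_le hc0 hden
  have hnum : (t - ε) * (E * σ).trace.re < (E * ρ).trace.re := by
    rw [← lt_div_iff₀ hden0]
    exact hxgt
  have hEA : 0 < (E * (ρ - ((t - ε : ℝ) : ℂ) • σ)).trace.re := by
    rw [trace_mul_sub_smul]
    linarith
  have hub := main_ub (herm_sub_smul hρ.1 hσ.1 (t - ε)) (c := α⁻¹) h1 h2
  have htr : (ρ - ((t - ε : ℝ) : ℂ) • σ).trace.re = 1 - (t - ε) := by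
    have := trace_re_sub_smul hρtr hσtr (t - ε)
    rw [show ρ - ((t - ε : ℝ) : ℂ) • σ = -(((t - ε : ℝ) : ℂ) • σ - ρ) from (neg_sub _ _).symm,
      Matrix.trace_neg, Complex.neg_re, this]
    ring
  have htn : traceNorm (ρ - ((t - ε : ℝ) : ℂ) • σ)
      = traceNorm (((t - ε : ℝ) : ℂ) • σ - ρ) := by
    rw [show ρ - ((t - ε : ℝ) : ℂ) • σ = -(((t - ε : ℝ) : ℂ) • σ - ρ) from (neg_sub _ _).symm,
      traceNorm_neg]
  rw [htr, htn] at hub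
  have hlip := traceNorm_lipschitz hρ.1 hσ hσtr (t - ε) t
  rw [show |t - ε - t| = ε by rw [show t - ε - t = -ε by ring, abs_neg, abs_of_pos hε]] at hlip
  nlinarith [lt_of_lt_of_le hEA hub]

lemma infAlpha_le_of (hα : 1 < α) (hρ : ρ.PosSemidef) (hρtr : ρ.trace = 1)
    (hσ : σ.PosSemidef) (hσtr : σ.trace = 1)
    (h : 0 ≤ ((1 + α⁻¹) * (t - 1) + (1 - α⁻¹) * traceNorm ((t : ℂ) • σ - ρ)) / 2) :
    infAlpha α ρ σ ≤ t := by
  have hc0 : (0 : ℝ) < α⁻¹ := inv_pos.mpr (by linarith)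
  have hc1 : α⁻¹ ≤ 1 := by rw [inv_le_one_iff₀]; right; linarith
  obtain ⟨E, h1, h2, hval⟩ := main_attain (herm_smul_sub hρ.1 hσ.1 t) (c := α⁻¹) hc1
  rw [trace_re_sub_smul hρtr hσtr t] at hval
  have hEA : 0 ≤ (E * ((t : ℂ) • σ - ρ)).trace.re := le_of_le_of_eq h hval.symm
  rw [trace_mul_smul_sub] at hEA
  have hden : α⁻¹ ≤ (E * σ).trace.re := trace_window_lower h1 hσ hσtr
  have hden0 : (0 : ℝ) < (E * σ).trace.re := lt_of_lt_of_le hc0 hden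
  have hx : (E * ρ).trace.re / (E * σ).trace.re ≤ t := by
    rw [div_le_iff₀ hden0]
    linarith
  exact le_trans (csInf_le (bddBelow_tSet hα hρ hσ) ⟨E, h1, h2, rfl⟩) hx

lemma of_infAlpha_le (hα : 1 < α) (hρ : ρ.PosSemidef) (hρtr : ρ.trace = 1)
    (hσ : σ.PosSemidef) (hσtr : σ.trace = 1) (h : infAlpha α ρ σ ≤ t) :
    0 ≤ ((1 + α⁻¹) * (t - 1) + (1 - α⁻¹) * traceNorm ((t : ℂ) • σ - ρ)) / 2 := by
  have hc0 : (0 : ℝ) < α⁻¹ := inv_pos.mpr (by linarith)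
  have hc1 : α⁻¹ ≤ 1 := by rw [inv_le_one_iff₀]; right; linarith
  refine le_of_forall_pos_le_add fun ε hε => ?_
  have hlt : sInf (tSet α ρ σ) < t + ε := lt_of_le_of_lt h (by linarith)
  obtain ⟨x, hxmem, hxlt⟩ := exists_lt_of_csInf_lt ⟨1, one_mem_tSet hα hρtr hσtr⟩ hlt
  obtain ⟨E, h1, h2, rfl⟩ := hxmem
  have hden : α⁻¹ ≤ (E * σ).trace.re := trace_window_lower h1 hσ hσtr
  have hden0 : (0 : ℝ) < (E * σ).trace.re := lt_of_lt_of_le hc0 hden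
  have hnum : (E * ρ).trace.re < (t + ε) * (E * σ).trace.re := by
    rw [← div_lt_iff₀ hden0]
    exact hxlt
  have hEA : 0 < (E * (((t + ε : ℝ) : ℂ) • σ - ρ)).trace.re := by
    rw [trace_mul_smul_sub]
    linarith
  have hub := main_ub (herm_smul_sub hρ.1 hσ.1 (t + ε)) (c := α⁻¹) h1 h2
  rw [trace_re_sub_smul hρtr hσtr (t + ε)] at hub
  have hlip := traceNorm_lipschitz hρ.1 hσ hσtr (t + ε) t
  rw [show |t + ε - t| = ε by rw [show t + ε - t = ε by ring, abs_of_pos hε]] at hlip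
  nlinarith [lt_of_lt_of_le hEA hub]

end Criteria

/-- Lemma 4 of the paper: for density matrices `(ρ,σ)` on `ℂ^n` and `(ρ',σ')` on `ℂ^m`,
the following are equivalent:
(i) `sup_α(ρ/σ) ≥ sup_α(ρ'/σ')` and `inf_α(ρ/σ) ≤ inf_α(ρ'/σ')` for all `α > 1`;
(ii) `‖tσ - ρ‖₁ ≥ ‖tσ' - ρ'‖₁` for all `t ≥ 0`. -/
theorem supAlpha_infAlpha_iff_traceNorm
    {n m : ℕ} (ρ σ : Matrix (Fin n) (Fin n) ℂ) (ρ' σ' : Matrix (Fin m) (Fin m) ℂ)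
    (hρ : ρ.PosSemidef) (hρtr : ρ.trace = 1)
    (hσ : σ.PosSemidef) (hσtr : σ.trace = 1)
    (hρ' : ρ'.PosSemidef) (hρ'tr : ρ'.trace = 1)
    (hσ' : σ'.PosSemidef) (hσ'tr : σ'.trace = 1) :
    (∀ α : ℝ, 1 < α →
        supAlpha α ρ' σ' ≤ supAlpha α ρ σ ∧ infAlpha α ρ σ ≤ infAlpha α ρ' σ') ↔
      (∀ t : ℝ, 0 ≤ t →
        traceNorm ((t : ℂ) • σ' - ρ') ≤ traceNorm ((t : ℂ) • σ - ρ)) := by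
  constructor
  · intro hi
    have key : ∀ s : ℝ, s ≠ 1 →
        traceNorm ((s : ℂ) • σ' - ρ') ≤ traceNorm ((s : ℂ) • σ - ρ) := by
      intro s hs1
      set f' := traceNorm ((s : ℂ) • σ' - ρ') with hf'
      set f := traceNorm ((s : ℂ) • σ - ρ) with hf
      rcases lt_or_gt_of_ne hs1 with hlt | hgt
      · -- s < 1 : use inf
        by_cases hcase : f' ≤ 1 - s
        · have hlow : 1 - s ≤ f := by
            have habs := abs_trace_le_traceNorm (herm_smul_sub hρ.1 hσ.1 s)
            rw [trace_re_sub_smul hρtr hσtr s] at habs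
            calc 1 - s = |s - 1| := by rw [abs_of_neg (by linarith : s - 1 < 0)]; ring
              _ ≤ f := habs
          linarith
        · push_neg at hcase
          have hd : (0 : ℝ) < 1 - s := by linarith
          have hfpos : (0 : ℝ) < f' + (1 - s) := by linarith
          set c : ℝ := (f' - (1 - s)) / (f' + (1 - s)) with hc
          have hc0 : 0 < c := div_pos (by linarith) hfpos
          have hc1 : c < 1 := (div_lt_one hfpos).mpr (by linarith)
          have hα1 : 1 < c⁻¹ := by
            have h1 := mul_inv_cancel₀ (ne_of_gt hc0)
            have h2 : (0 : ℝ) < c⁻¹ := inv_pos.mpr hc0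
            nlinarith
          have hcinv : (c⁻¹)⁻¹ = c := inv_inv c
          have hzero : ((1 + c) * (s - 1) + (1 - c) * f') / 2 = 0 := by
            rw [hc]
            field_simp
            ring
          have h1 : infAlpha c⁻¹ ρ' σ' ≤ s :=
            infAlpha_le_of hα1 hρ' hρ'tr hσ' hσ'tr (by rw [hcinv, ← hf', hzero])
          have h2 : infAlpha c⁻¹ ρ σ ≤ s := le_trans (hi c⁻¹ hα1).2 h1
          have h3 := of_infAlpha_le hα1 hρ hρtr hσ hσtr h2
          rw [hcinv, ← hf] at h3
          have hkey : (1 + c) * (1 - s) = (1 - c) * f' := by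
            rw [hc]
            field_simp
            ring
          nlinarith [h3, hkey, hc1]
      · -- s > 1 : use sup
        by_cases hcase : f' ≤ s - 1
        · have hlow : s - 1 ≤ f := by
            have habs := abs_trace_le_traceNorm (herm_smul_sub hρ.1 hσ.1 s)
            rw [trace_re_sub_smul hρtr hσtr s] at habs
            calc s - 1 = |s - 1| := (abs_of_pos (by linarith : 0 < s - 1)).symm
              _ ≤ f := habs
          linarith
        · push_neg at hcase
          have hd : (0 : ℝ) < s - 1 := by linarith
          have hfpos : (0 : ℝ) < f' + (s - 1) := by linarith
          set c : ℝ := (f' - (s - 1)) / (f' + (s - 1)) with hc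
          have hc0 : 0 < c := div_pos (by linarith) hfpos
          have hc1 : c < 1 := (div_lt_one hfpos).mpr (by linarith)
          have hα1 : 1 < c⁻¹ := by
            have h1 := mul_inv_cancel₀ (ne_of_gt hc0)
            have h2 : (0 : ℝ) < c⁻¹ := inv_pos.mpr hc0
            nlinarith
          have hcinv : (c⁻¹)⁻¹ = c := inv_inv c
          have hzero : ((1 + c) * (1 - s) + (1 - c) * f') / 2 = 0 := by
            rw [hc]
            field_simp
            ring
          have h1 : s ≤ supAlpha c⁻¹ ρ' σ' :=
            le_supAlpha_of hα1 hρ' hρ'tr hσ' hσ'tr (by rw [hcinv, ← hf', hzero])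
          have h2 : s ≤ supAlpha c⁻¹ ρ σ := le_trans h1 (hi c⁻¹ hα1).1
          have h3 := of_le_supAlpha hα1 hρ hρtr hσ hσtr h2
          rw [hcinv, ← hf] at h3
          have hkey : (1 + c) * (s - 1) = (1 - c) * f' := by
            rw [hc]
            field_simp
            ring
          nlinarith [h3, hkey, hc1]
    intro t ht
    by_cases ht1 : t = 1
    · subst ht1
      refine le_of_forall_pos_le_add fun ε hε => ?_
      have h1 := key (1 + ε / 2) (by linarith)
      have l1 := traceNorm_lipschitz hρ'.1 hσ' hσ'tr 1 (1 + ε / 2)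
      have l2 := traceNorm_lipschitz hρ.1 hσ hσtr (1 + ε / 2) 1
      rw [show (1 : ℝ) - (1 + ε / 2) = -(ε / 2) by ring, abs_neg,
        abs_of_pos (by linarith : (0:ℝ) < ε / 2)] at l1
      rw [show (1 : ℝ) + ε / 2 - 1 = ε / 2 by ring,
        abs_of_pos (by linarith : (0:ℝ) < ε / 2)] at l2
      push_cast at l1 l2 h1 ⊢
      linarith
    · exact key t ht1
  · intro hii α hα
    have hc0 : (0 : ℝ) < α⁻¹ := inv_pos.mpr (by linarith)
    have hc1 : α⁻¹ ≤ 1 := by rw [inv_le_one_iff₀]; right; linarith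
    constructor
    · set t := supAlpha α ρ' σ' with htdef
      have hsup1 : (1 : ℝ) ≤ t :=
        le_csSup (bddAbove_tSet hα hρ' hρ'tr hσ' hσ'tr) (one_mem_tSet hα hρ'tr hσ'tr)
      have h1 := of_le_supAlpha hα hρ' hρ'tr hσ' hσ'tr (le_refl t)
      have h2 := hii t (by linarith)
      refine le_supAlpha_of hα hρ hρtr hσ hσtr ?_
      nlinarith [h1, h2, hc1]
    · set t := infAlpha α ρ' σ' with htdef
      have ht0 : (0 : ℝ) ≤ t :=
        le_csInf ⟨1, one_mem_tSet hα hρ'tr hσ'tr⟩ fun x hx => tSet_nonneg hα hρ' hσ' x hx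
      have h1 := of_infAlpha_le hα hρ' hρ'tr hσ' hσ'tr (le_refl t)
      have h2 := hii t ht0
      refine infAlpha_le_of hα hρ hρtr hσ hσtr ?_
      nlinarith [h1, h2, hc1]
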